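/- Let V and V̄ be real Hilbert spaces with inner products a(·,·) and ā(·,·) inducing norms ‖·‖_A and ‖·‖_Ā, and let Π : V̄ → V be a bounded linear surjection. Suppose (i) there exists c₀ > 0 such that for every v ∈ V there is v̄ ∈ V̄ with Πv̄ = v and ‖v̄‖_Ā ≤ c₀‖v‖_A, and (ii) there exists c₁ > 0 such that ‖Πv̄‖_A ≤ c₁‖v̄‖_Ā for all v̄ ∈ V̄. Define B = Π ∘ Ā⁻¹ ∘ Π* : V' → V, where A : V → V' and Ā : V̄ → V̄' are the Riesz operators of a and ā. Then for all v ∈ V, c₀⁻²‖v‖_A² ≤ a(BAv, v) ≤ c₁²‖v‖_A². (Fictitious Space Lemma) -/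

import Mathlib

/-- **Fictitious Space Lemma.**
`V` and `W` (= V̄) are real Hilbert spaces, `Π : W → V` a bounded surjective linear map.
`A`, `Abar` are the Riesz maps (`InnerProductSpace.toDual`), `Π*` is the dual map
`f ↦ f ∘ Π`, and `B = Π ∘ Abar⁻¹ ∘ Π*`, so `BA v = Π (Abar⁻¹ ((A v) ∘ Π))`.
If the stable-lifting bound with constant `c₀` and the continuity bound with
constant `c₁` hold, then `c₀⁻² ‖v‖² ≤ a(BA v, v) ≤ c₁² ‖v‖²` for all `v`. -/
theorem fictitious_space_lemma
    {V W : Type*} [NormedAddCommGroup V] [InnerProductSpace ℝ V] [CompleteSpace V]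
    [NormedAddCommGroup W] [InnerProductSpace ℝ W] [CompleteSpace W]
    (Pi : W →L[ℝ] V) (c₀ c₁ : ℝ) (hc₀ : 0 < c₀) (hc₁ : 0 < c₁)
    (hsurj : Function.Surjective Pi)
    (hstable : ∀ v : V, ∃ w : W, Pi w = v ∧ ‖w‖ ≤ c₀ * ‖v‖)
    (hcont : ∀ w : W, ‖Pi w‖ ≤ c₁ * ‖w‖)
    (BA : V → V)
    (hBA : ∀ v : V, BA v =
      Pi ((InnerProductSpace.toDual ℝ W).symm
        (((InnerProductSpace.toDual ℝ V v) : V →L[ℝ] ℝ).comp Pi))) :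
    ∀ v : V, (c₀ ^ 2)⁻¹ * ‖v‖ ^ 2 ≤ (inner ℝ (BA v) v : ℝ) ∧
      (inner ℝ (BA v) v : ℝ) ≤ c₁ ^ 2 * ‖v‖ ^ 2 := by
  intro v
  set f : W →L[ℝ] ℝ := ((InnerProductSpace.toDual ℝ V v) : V →L[ℝ] ℝ).comp Pi with hf
  set ws : W := (InnerProductSpace.toDual ℝ W).symm f with hws
  have hkey : ∀ w : W, (inner ℝ ws w : ℝ) = inner ℝ v (Pi w) := by
    intro w
    have h1 : (inner ℝ ws w : ℝ) = f w := InnerProductSpace.toDual_symm_apply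
    exact h1
  have hinner : (inner ℝ (BA v) v : ℝ) = ‖ws‖ ^ 2 := by
    rw [hBA v, real_inner_comm]
    have := hkey ws
    rw [← this]
    exact real_inner_self_eq_norm_sq ws
  rw [hinner]
  constructor
  · -- lower bound
    obtain ⟨w, hw, hwn⟩ := hstable v
    have h1 : ‖v‖ ^ 2 = inner ℝ ws w := by
      rw [hkey w, hw, real_inner_self_eq_norm_sq]
    have h2 : (inner ℝ ws w : ℝ) ≤ ‖ws‖ * ‖w‖ := real_inner_le_norm ws w
    have h3 : ‖v‖ ^ 2 ≤ ‖ws‖ * (c₀ * ‖v‖) := by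
      calc ‖v‖ ^ 2 = inner ℝ ws w := h1
        _ ≤ ‖ws‖ * ‖w‖ := h2
        _ ≤ ‖ws‖ * (c₀ * ‖v‖) := by
            exact mul_le_mul_of_nonneg_left hwn (norm_nonneg ws)
    rcases eq_or_ne v 0 with hv | hv
    · simp [hv]
    · have hvpos : (0:ℝ) < ‖v‖ := norm_pos_iff.mpr hv
      have h4 : ‖v‖ ≤ c₀ * ‖ws‖ := by
        have := h3
        rw [pow_two] at this
        nlinarith [norm_nonneg ws]
      rw [inv_mul_le_iff₀ (by positivity)]
      calc ‖v‖ ^ 2 ≤ (c₀ * ‖ws‖) ^ 2 := by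
            apply sq_le_sq' _ h4
            nlinarith [norm_nonneg ws]
        _ = c₀ ^ 2 * ‖ws‖ ^ 2 := by ring
  · -- upper bound
    have h1 : (inner ℝ ws ws : ℝ) = inner ℝ v (Pi ws) := hkey ws
    have h2 : (inner ℝ v (Pi ws) : ℝ) ≤ ‖v‖ * (c₁ * ‖ws‖) := by
      calc (inner ℝ v (Pi ws) : ℝ) ≤ ‖v‖ * ‖Pi ws‖ := real_inner_le_norm _ _
        _ ≤ ‖v‖ * (c₁ * ‖ws‖) :=
            mul_le_mul_of_nonneg_left (hcont ws) (norm_nonneg v)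
    have h3 : ‖ws‖ ^ 2 ≤ ‖v‖ * (c₁ * ‖ws‖) := by
      rw [← real_inner_self_eq_norm_sq, h1]; exact h2
    have h4 : ‖ws‖ ≤ c₁ * ‖v‖ := by
      rcases eq_or_lt_of_le (norm_nonneg ws) with hw0 | hw0
      · rw [← hw0]; positivity
      · rw [pow_two] at h3; nlinarith
    calc ‖ws‖ ^ 2 ≤ (c₁ * ‖v‖) ^ 2 := by
          apply sq_le_sq' _ h4; nlinarith [norm_nonneg ws]
      _ = c₁ ^ 2 * ‖v‖ ^ 2 := by ring
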